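/- For integers 0 ≤ k ≤ l, let f(x) = Σ_{i=k}^{l} x^i/i!. Let x_0 > 0 and suppose n_0 := x_0 · f'(x_0)/f(x_0) is a nonnegative integer. Then (1/f(x_0)) · x_0^{n_0}/n_0! ≥ e^{−n_0} · n_0^{n_0}/n_0! (with the convention 0^0 = 1); equivalently, f(x_0) ≤ (e·x_0/n_0)^{n_0} when n_0 ≥ 1. -/

import Mathlib

/-- For `0 ≤ k ≤ l` let `f x = ∑_{i=k}^{l} x^i / i!`. If `x₀ > 0` and
`n₀ = x₀ f'(x₀) / f(x₀)` is a nonnegative integer, then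
`(1 / f(x₀)) · x₀^{n₀} / n₀! ≥ e^{-n₀} · n₀^{n₀} / n₀!` (with the convention `0^0 = 1`). -/
theorem truncated_exp_prob_at_mean_ge_poisson
    (k l : ℕ) (hkl : k ≤ l)
    (f : ℝ → ℝ) (hf : f = fun x => ∑ i ∈ Finset.Icc k l, x ^ i / (Nat.factorial i : ℝ))
    (x₀ : ℝ) (hx₀ : 0 < x₀) (n₀ : ℕ)
    (hn₀ : (n₀ : ℝ) = x₀ * deriv f x₀ / f x₀) :
    Real.exp (-(n₀ : ℝ)) * (n₀ : ℝ) ^ n₀ / (n₀.factorial : ℝ) ≤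
      (1 / f x₀) * x₀ ^ n₀ / (n₀.factorial : ℝ) := by
  have hne : (Finset.Icc k l).Nonempty := Finset.nonempty_Icc.2 hkl
  have hF : 0 < f x₀ := by
    rw [hf]
    exact Finset.sum_pos (fun i _ => by positivity) hne
  have hderiv : deriv f x₀ = ∑ i ∈ Finset.Icc k l, (i : ℝ) * x₀ ^ (i - 1) / (i.factorial : ℝ) := by
    rw [hf]
    exact (HasDerivAt.fun_sum fun i _ => (hasDerivAt_pow i x₀).div_const _).deriv
  have hkey : ∑ i ∈ Finset.Icc k l, (i : ℝ) * x₀ ^ i / (i.factorial : ℝ) = (n₀ : ℝ) * f x₀ := by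
    have h1 : (n₀ : ℝ) * f x₀ = x₀ * deriv f x₀ := by
      rw [hn₀, div_mul_cancel₀ _ hF.ne']
    rw [h1, hderiv, Finset.mul_sum]
    refine Finset.sum_congr rfl fun i _ => ?_
    rcases Nat.eq_zero_or_pos i with h | h
    · simp [h]
    · have : x₀ * ((i : ℝ) * x₀ ^ (i - 1) / (i.factorial : ℝ))
          = (i : ℝ) * (x₀ ^ (i - 1) * x₀) / (i.factorial : ℝ) := by ring
      rw [this, ← pow_succ, Nat.sub_add_cancel h]
  rcases Nat.eq_zero_or_pos n₀ with hn0 | hn1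
  · -- n₀ = 0 : forces l = 0, f x₀ = 1
    subst hn0
    have hzero : ∑ i ∈ Finset.Icc k l, (i : ℝ) * x₀ ^ i / (i.factorial : ℝ) = 0 := by
      rw [hkey]; ring
    have hl : l = 0 := by
      by_contra hl
      have hlpos : 0 < l := Nat.pos_of_ne_zero hl
      have hmem : l ∈ Finset.Icc k l := Finset.mem_Icc.2 ⟨hkl, le_refl l⟩
      have h0 := (Finset.sum_eq_zero_iff_of_nonneg (fun i _ => by positivity)).1 hzero l hmem
      have hp : (0:ℝ) < (l : ℝ) * x₀ ^ l / (l.factorial : ℝ) := by positivity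
      linarith
    have hk : k = 0 := Nat.le_zero.1 (hl ▸ hkl)
    have hfval : f x₀ = 1 := by
      rw [hf]; subst hk; subst hl; simp
    simp [hfval]
  · -- main case n₀ ≥ 1
    have hFsum : f x₀ = ∑ i ∈ Finset.Icc k l, x₀ ^ i / (i.factorial : ℝ) := by rw [hf]
    set F := f x₀ with hFdef
    set c : ℝ := (n₀ : ℝ) / x₀ with hc
    have hcpos : 0 < c := by positivity
    have hxc : x₀ * c = (n₀ : ℝ) := by rw [hc, mul_div_assoc']; exact mul_div_cancel_left₀ _ hx₀.ne'
    set w : ℕ → ℝ := fun i => x₀ ^ i / ((i.factorial : ℝ) * F) with hw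
    have hw0 : ∀ i ∈ Finset.Icc k l, 0 ≤ w i := fun i _ => by
      have := hF; positivity
    have hw1 : ∑ i ∈ Finset.Icc k l, w i = 1 := by
      have h : ∑ i ∈ Finset.Icc k l, w i
          = (∑ i ∈ Finset.Icc k l, x₀ ^ i / (i.factorial : ℝ)) / F := by
        rw [Finset.sum_div]
        exact Finset.sum_congr rfl fun i _ => by rw [hw]; field_simp
      rw [h, ← hFsum, div_self hF.ne']
    have hwi : ∑ i ∈ Finset.Icc k l, w i * (i : ℝ) = (n₀ : ℝ) := by
      have h : ∑ i ∈ Finset.Icc k l, w i * (i : ℝ)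
          = (∑ i ∈ Finset.Icc k l, (i : ℝ) * x₀ ^ i / (i.factorial : ℝ)) / F := by
        rw [Finset.sum_div]
        exact Finset.sum_congr rfl fun i _ => by rw [hw]; field_simp
      rw [h, hkey, mul_div_assoc, div_self hF.ne', mul_one]
    -- Jensen's inequality for exp
    have hjen := convexOn_exp.map_sum_le (t := Finset.Icc k l) (w := w)
      (p := fun i => (i : ℝ) * Real.log c) hw0 hw1 (fun i _ => Set.mem_univ _)
    have hLHS : ∑ i ∈ Finset.Icc k l, w i • ((i : ℝ) * Real.log c) = (n₀ : ℝ) * Real.log c := by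
      rw [← hwi, Finset.sum_mul]
      exact Finset.sum_congr rfl fun i _ => by simp [mul_assoc]
    have hexpc : ∀ i : ℕ, Real.exp ((i : ℝ) * Real.log c) = c ^ i := fun i => by
      rw [Real.exp_nat_mul, Real.exp_log hcpos]
    have hRHS : ∑ i ∈ Finset.Icc k l, w i • Real.exp ((i : ℝ) * Real.log c)
        = (∑ i ∈ Finset.Icc k l, ((n₀ : ℝ)) ^ i / (i.factorial : ℝ)) / F := by
      rw [Finset.sum_div]
      refine Finset.sum_congr rfl fun i _ => ?_
      rw [smul_eq_mul, hexpc, hw]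
      rw [← hxc, mul_pow]
      field_simp
    rw [hLHS, hRHS, hexpc n₀] at hjen
    -- bound the truncated sum by exp
    have hsum_exp : ∑ i ∈ Finset.Icc k l, ((n₀ : ℝ)) ^ i / (i.factorial : ℝ) ≤ Real.exp n₀ := by
      calc ∑ i ∈ Finset.Icc k l, ((n₀ : ℝ)) ^ i / (i.factorial : ℝ)
          ≤ ∑ i ∈ Finset.range (l + 1), ((n₀ : ℝ)) ^ i / (i.factorial : ℝ) := by
            apply Finset.sum_le_sum_of_subset_of_nonneg
            · intro i hi
              simp only [Finset.mem_Icc] at hi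
              exact Finset.mem_range.2 (Nat.lt_succ_of_le hi.2)
            · intro i _ _; positivity
        _ ≤ Real.exp n₀ := Real.sum_le_exp_of_nonneg (by positivity) _
    have h2 : c ^ n₀ ≤ Real.exp n₀ / F := le_trans hjen (by gcongr)
    -- conclude
    have hfac : (0:ℝ) < (n₀.factorial : ℝ) := by positivity
    have hcpow : c ^ n₀ = (n₀ : ℝ) ^ n₀ / x₀ ^ n₀ := by rw [hc, div_pow]
    rw [hcpow, div_le_div_iff₀ (by positivity) hF] at h2
    gcongr ?_ / _
    have h3 : (n₀:ℝ)^n₀ / Real.exp n₀ ≤ x₀^n₀ / F := by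
      rw [div_le_div_iff₀ (Real.exp_pos _) hF]
      nlinarith [h2]
    calc Real.exp (-(n₀:ℝ)) * (n₀:ℝ) ^ n₀ = (n₀:ℝ)^n₀ / Real.exp n₀ := by
          rw [Real.exp_neg]; ring
      _ ≤ x₀^n₀ / F := h3
      _ = 1 / F * x₀ ^ n₀ := by ring
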